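/- If a binary relation ⪰ on a convex subset C of ℝ^n satisfies extended mixture cancellation and has closed graph, then ⪰ satisfies (full) mixture independence: for all a, b, c ∈ C and every real r ∈ (0,1], a ⪰ b if and only if r·a + (1−r)·c ⪰ r·b + (1−r)·c. -/

import Mathlib

open Filter Topology

/-- Extended mixture cancellation for a relation on a subset of a real vector space. -/
def ExtMixCancel {V : Type*} [AddCommGroup V] [Module ℝ V]
    (C : Set V) (R : V → V → Prop) : Prop :=
  ∀ (n : ℕ) (a b : Fin (n + 1) → V),
    (∀ i, a i ∈ C) → (∀ i, b i ∈ C) →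
    (∑ i, a i = ∑ i, b i) →
    (∃ k, k ≤ n ∧ (∀ i : Fin (n + 1), (i : ℕ) < k → R (a i) (b i)) ∧
      (∀ i : Fin (n + 1), k ≤ (i : ℕ) → a i = a (Fin.last n) ∧ b i = b (Fin.last n))) →
    R (b (Fin.last n)) (a (Fin.last n))

/-- The graph `{(a, b) ∈ C × C : a ⪰ b}` is closed. -/
def ClosedGraphOn {V : Type*} [TopologicalSpace V] (C : Set V) (R : V → V → Prop) : Prop :=
  IsClosed {p : V × V | p.1 ∈ C ∧ p.2 ∈ C ∧ R p.1 p.2}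

section Aux
variable {n : ℕ} {C : Set (Fin n → ℝ)} {R : (Fin n → ℝ) → (Fin n → ℝ) → Prop}

lemma sum_ite_block (k t : ℕ) (x u : Fin n → ℝ) :
    ∑ i : Fin (k + t), (if (i : ℕ) < k then x else u) = (k : ℝ) • x + (t : ℝ) • u := by
  rw [Fin.sum_univ_add]
  have h1 : ∀ i : Fin k, (if ((Fin.castAdd t i : Fin (k+t)) : ℕ) < k then x else u) = x :=
    fun i => if_pos (by simpa using i.isLt)
  have h2 : ∀ i : Fin t, (if ((Fin.natAdd k i : Fin (k+t)) : ℕ) < k then x else u) = u :=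
    fun i => if_neg (by simp)
  simp only [h1, h2, Finset.sum_const, Finset.card_univ, Fintype.card_fin]
  rw [Nat.cast_smul_eq_nsmul, Nat.cast_smul_eq_nsmul]

lemma two_block (hcancel : ExtMixCancel C R)
    {x y u v : Fin n → ℝ} (hx : x ∈ C) (hy : y ∈ C) (hu : u ∈ C) (hv : v ∈ C)
    (k t : ℕ) (ht : 0 < t)
    (hsum : (k : ℝ) • x + (t : ℝ) • u = (k : ℝ) • y + (t : ℝ) • v)
    (hR : R x y) : R v u := by
  obtain ⟨t, rfl⟩ : ∃ t', t = t' + 1 := ⟨t - 1, by omega⟩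
  have hlast : ¬ ((Fin.last (k + t) : ℕ) < k) := by simp [Fin.last]
  have key := hcancel (k + t)
    (fun i => if (i : ℕ) < k then x else u)
    (fun i => if (i : ℕ) < k then y else v)
    (fun i => by split <;> assumption)
    (fun i => by split <;> assumption)
    ((sum_ite_block k (t+1) x u).trans (hsum.trans (sum_ite_block k (t+1) y v).symm))
    ⟨k, by omega,
      fun i hi => by simp only [hi, if_pos]; exact hR,
      fun i hi => by
        have h1 : ¬ ((i : ℕ) < k) := by omega
        simp [h1, hlast]⟩
  simpa only [if_neg hlast] using key

lemma rat_indep (hcancel : ExtMixCancel C R) (hC : Convex ℝ C)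
    {a b c : Fin n → ℝ} (ha : a ∈ C) (hb : b ∈ C) (hc : c ∈ C)
    (s : ℚ) (hs0 : 0 < s) (hs1 : s ≤ 1) :
    (R a b ↔ R (((s : ℝ)) • a + (1 - (s : ℝ)) • c) (((s : ℝ)) • b + (1 - (s : ℝ)) • c)) := by
  set p : ℕ := s.num.toNat with hp
  set q : ℕ := s.den with hq
  have hq0 : 0 < q := s.pos
  have hnum : (0 : ℤ) < s.num := Rat.num_pos.2 hs0
  have hp0 : 0 < p := by omega
  have hps : ((p : ℝ)) = (s.num : ℝ) := by
    rw [hp]; exact_mod_cast congrArg (Int.cast : ℤ → ℝ) (Int.toNat_of_nonneg hnum.le)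
  have hsr : (s : ℝ) = (p : ℝ) / (q : ℝ) := by rw [Rat.cast_def, hps]
  have hqne : (q : ℝ) ≠ 0 := Nat.cast_ne_zero.2 hq0.ne'
  have hr0 : (0 : ℝ) ≤ (s : ℝ) := by exact_mod_cast hs0.le
  have hr1 : (s : ℝ) ≤ 1 := by exact_mod_cast hs1
  have hm : ((s : ℝ)) • a + (1 - (s : ℝ)) • c ∈ C := hC ha hc hr0 (by linarith) (by ring)
  have hm' : ((s : ℝ)) • b + (1 - (s : ℝ)) • c ∈ C := hC hb hc hr0 (by linarith) (by ring)
  constructor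
  · intro hab
    refine two_block hcancel ha hb hm' hm p q hq0 ?_ hab
    rw [hsr]; match_scalars <;> field_simp
  · intro h
    refine two_block hcancel hm hm' hb ha q p hp0 ?_ h
    rw [hsr]; match_scalars <;> field_simp

end Aux

theorem mixtureIndependence_of_extMixCancel_closedGraph
    {n : ℕ} (C : Set (Fin n → ℝ)) (R : (Fin n → ℝ) → (Fin n → ℝ) → Prop)
    (hC : Convex ℝ C) (hcancel : ExtMixCancel C R) (hclosed : ClosedGraphOn C R) :
    ∀ a ∈ C, ∀ b ∈ C, ∀ c ∈ C, ∀ r : ℝ, 0 < r → r ≤ 1 →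
      (R a b ↔ R (r • a + (1 - r) • c) (r • b + (1 - r) • c)) := by
  -- forward direction for real r
  have fwd : ∀ a ∈ C, ∀ b ∈ C, ∀ c ∈ C, ∀ r : ℝ, 0 < r → r ≤ 1 →
      R a b → R (r • a + (1 - r) • c) (r • b + (1 - r) • c) := by
    intro a ha b hb c hc r hr0 hr1 hab
    -- choose rationals s j with max (r/2) (r - 1/(j+1)) < s j < r
    have hex : ∀ j : ℕ, ∃ s : ℚ, max (r/2) (r - 1/(j+1)) < (s : ℝ) ∧ (s : ℝ) < r := by
      intro j
      apply exists_rat_btwn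
      apply max_lt (by linarith)
      have : (0:ℝ) < 1/(j+1) := by positivity
      linarith
    choose s hs1 hs2 using hex
    have hspos : ∀ j, 0 < s j := by
      intro j
      have := lt_of_le_of_lt (le_max_left (r/2) (r - 1/(j+1))) (hs1 j)
      have h2 : (0:ℝ) < (s j : ℝ) := by linarith
      exact_mod_cast h2
    have hsle1 : ∀ j, (s j : ℚ) ≤ 1 := by
      intro j
      have : (s j : ℝ) ≤ 1 := le_of_lt (lt_of_lt_of_le (hs2 j) hr1)
      exact_mod_cast this
    have htend : Tendsto (fun j : ℕ => ((s j : ℝ))) atTop (𝓝 r) := by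
      apply tendsto_of_tendsto_of_tendsto_of_le_of_le
        (g := fun j : ℕ => r - 1/(j+1)) (h := fun _ : ℕ => r)
      · have : Tendsto (fun j : ℕ => 1/((j:ℝ)+1)) atTop (𝓝 0) :=
          tendsto_one_div_add_atTop_nhds_zero_nat
        simpa using tendsto_const_nhds.sub this
      · exact tendsto_const_nhds
      · intro j
        exact le_of_lt (lt_of_le_of_lt (le_max_right _ _) (hs1 j))
      · exact fun j => (hs2 j).le
    have hmem : ∀ j : ℕ,
        (((s j : ℝ)) • a + (1 - (s j : ℝ)) • c, ((s j : ℝ)) • b + (1 - (s j : ℝ)) • c)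
          ∈ {p : (Fin n → ℝ) × (Fin n → ℝ) | p.1 ∈ C ∧ p.2 ∈ C ∧ R p.1 p.2} := by
      intro j
      have h0 : (0:ℝ) ≤ (s j : ℝ) := by exact_mod_cast (hspos j).le
      have h1 : (s j : ℝ) ≤ 1 := by exact_mod_cast hsle1 j
      refine ⟨hC ha hc h0 (by linarith) (by ring), hC hb hc h0 (by linarith) (by ring), ?_⟩
      exact (rat_indep hcancel hC ha hb hc (s j) (hspos j) (hsle1 j)).1 hab
    have htend2 : Tendsto
        (fun j : ℕ => (((s j : ℝ)) • a + (1 - (s j : ℝ)) • c,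
                        ((s j : ℝ)) • b + (1 - (s j : ℝ)) • c))
        atTop (𝓝 (r • a + (1 - r) • c, r • b + (1 - r) • c)) := by
      refine Tendsto.prodMk_nhds ?_ ?_
      · exact (htend.smul_const a).add ((tendsto_const_nhds.sub htend).smul_const c)
      · exact (htend.smul_const b).add ((tendsto_const_nhds.sub htend).smul_const c)
    have := hclosed.mem_of_tendsto htend2 (Filter.Eventually.of_forall hmem)
    exact this.2.2
  intro a ha b hb c hc r hr0 hr1
  constructor
  · exact fwd a ha b hb c hc r hr0 hr1
  · intro h
    -- pick a rational s in (0, r)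
    obtain ⟨s, hs0, hsr⟩ := exists_rat_btwn hr0
    have hs0' : 0 < s := by exact_mod_cast hs0
    have hsle1 : s ≤ 1 := by
      have : (s : ℝ) ≤ 1 := le_of_lt (lt_of_lt_of_le hsr hr1)
      exact_mod_cast this
    set t : ℝ := (s : ℝ) / r with htdef
    have ht0 : 0 < t := div_pos hs0 hr0
    have ht1 : t ≤ 1 := by
      rw [htdef, div_le_one hr0]; exact hsr.le
    have hm : r • a + (1 - r) • c ∈ C := hC ha hc hr0.le (by linarith) (by ring)
    have hm' : r • b + (1 - r) • c ∈ C := hC hb hc hr0.le (by linarith) (by ring)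
    have key := fwd _ hm _ hm' c hc t ht0 ht1 h
    have e1 : t • (r • a + (1 - r) • c) + (1 - t) • c
        = ((s : ℝ)) • a + (1 - (s : ℝ)) • c := by
      rw [htdef]; match_scalars <;> field_simp <;> ring
    have e2 : t • (r • b + (1 - r) • c) + (1 - t) • c
        = ((s : ℝ)) • b + (1 - (s : ℝ)) • c := by
      rw [htdef]; match_scalars <;> field_simp <;> ring
    rw [e1, e2] at key
    exact (rat_indep hcancel hC ha hb hc s hs0' hsle1).2 key
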